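/- Let R be a local ring with maximal ideal m containing p, with R/pR reduced, and let α : R → M be a map of R-modules such that the induced map α̅ : R/pR → M/pM is injective. Then for all e ≥ 0, the map F^e(α̅) : F^e(R/pR) → F^e(M/pM) is injective, where F^e is the e-th Frobenius functor over R/pR. -/

import Mathlib

open TensorProduct

section Frob

variable (R : Type*) [CommRing R] (p : ℕ) [ExpChar R p]

/-- `R` viewed as an `R`-algebra via the `e`-th iterate of Frobenius. -/
def FrobTwist (p e : ℕ) : Type _ := R

instance (p e : ℕ) : CommRing (FrobTwist R p e) := inferInstanceAs (CommRing R)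

noncomputable instance (e : ℕ) : Algebra R (FrobTwist R p e) :=
  RingHom.toAlgebra (show R →+* FrobTwist R p e from iterateFrobenius R p e)

end Frob

/-- The identity, viewed as a ring hom from the Frobenius twist back to `R`. -/
def FrobTwist.un (R : Type*) [CommRing R] (p e : ℕ) : FrobTwist R p e →+* R := RingHom.id R

lemma aux_isField {S : Type*} [CommRing S] [IsReduced S] {P : Ideal S} [P.IsPrime]
    (hmin : P ∈ minimalPrimes S) : IsField (Localization P.primeCompl) := by
  rw [IsLocalRing.isField_iff_maximalIdeal_eq, eq_bot_iff]
  intro x hx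
  rw [Ideal.mem_bot]
  have hs := IsLocalization.subsingleton_primeSpectrum_of_mem_minimalPrimes P hmin
    (Localization P.primeCompl)
  have hxn : IsNilpotent x := by
    rw [← mem_nilradical, nilradical_eq_sInf]
    refine Submodule.mem_sInf.2 fun Q hQ => ?_
    have hQm := congrArg PrimeSpectrum.asIdeal
      (hs.elim ⟨Q, hQ⟩ ⟨_, (IsLocalRing.maximalIdeal.isMaximal _).isPrime⟩)
    simp only at hQm
    rw [hQm]
    exact hx
  exact hxn.eq_zero

theorem aux_baseChange_injective {S N : Type*} [CommRing S] [IsReduced S]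
    [AddCommGroup N] [Module S N]
    (p : ℕ) [Fact p.Prime] [CharP S p]
    (f : S →ₗ[S] N) (hinj : Function.Injective f) (e : ℕ) :
    Function.Injective (f.baseChange (FrobTwist S p e)) := by
  classical
  set A := FrobTwist S p e with hA
  rw [injective_iff_map_eq_zero]
  intro t ht
  set a : A := TensorProduct.rid S A t with ha
  have hta : t = a ⊗ₜ[S] (1 : S) := by
    conv_lhs => rw [← (TensorProduct.rid S A).symm_apply_apply t]
    rw [TensorProduct.rid_symm_apply]
  rw [hta] at ht ⊢
  rw [LinearMap.baseChange_tmul] at ht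
  suffices h0 : a = 0 by rw [h0, TensorProduct.zero_tmul]
  suffices hmem : ∀ P ∈ minimalPrimes S, FrobTwist.un S p e a ∈ P by
    have hnil : IsNilpotent (FrobTwist.un S p e a) := by
      rw [← mem_nilradical, nilradical_eq_sInf]
      refine Submodule.mem_sInf.2 fun P hP => ?_
      haveI : Ideal.IsPrime P := hP
      obtain ⟨q, hq, hqP⟩ := Ideal.exists_minimalPrimes_le (I := (⊥ : Ideal S)) bot_le (J := P)
      exact hqP (hmem q hq)
    have hz : FrobTwist.un S p e a = 0 := hnil.eq_zero
    exact hz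
  intro P hP
  haveI hPp : P.IsPrime := hP.1.1
  set κ := Localization P.primeCompl with hκ
  set V := LocalizedModule P.primeCompl N with hV
  set m0 : V := LocalizedModule.mkLinearMap P.primeCompl N (f 1) with hm0def
  have hm0 : m0 ≠ 0 := by
    intro h
    have h' : LocalizedModule.mk (f 1) (1 : P.primeCompl) = LocalizedModule.mk (0 : N) 1 := by
      simpa [hm0def, LocalizedModule.mkLinearMap] using h
    rw [LocalizedModule.mk_eq] at h'
    obtain ⟨u, hu⟩ := h'
    simp only [one_smul, smul_zero] at hu
    rw [Submonoid.smul_def] at hu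
    have h3 : f (u : S) = (u : S) • f 1 := by
      have := f.map_smul (u : S) 1
      rwa [smul_eq_mul, mul_one] at this
    have : (u : S) = 0 := hinj (by rw [h3.trans hu, map_zero])
    exact u.2 (this ▸ P.zero_mem)
  -- a linear functional on the localized module sending m0 to 1
  have hgl : ∃ gl : V →ₗ[κ] κ, gl m0 = 1 := by
    letI : Field κ := (aux_isField hP).toField
    have h1 : ∃ φ : Module.Dual κ V, φ m0 ≠ 0 := by
      by_contra h
      push_neg at h
      exact hm0 ((Module.forall_dual_apply_eq_zero_iff κ m0).1 h)
    obtain ⟨φ, hφ⟩ := h1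
    refine ⟨(φ m0)⁻¹ • φ, ?_⟩
    rw [LinearMap.smul_apply, smul_eq_mul, inv_mul_cancel₀ hφ]
  obtain ⟨gl, hgl1⟩ := hgl
  set g : N →ₗ[S] κ :=
    (gl.restrictScalars S).comp (LocalizedModule.mkLinearMap P.primeCompl N) with hg
  have hg1 : g (f 1) = 1 := hgl1
  haveI : CharP κ p := by
    refine (CharP.charP_iff_prime_eq_zero Fact.out).2 ?_
    have h1 : algebraMap S κ ((p : ℕ) : S) = 0 := by
      rw [CharP.cast_eq_zero S p, map_zero]
    rwa [map_natCast] at h1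
  haveI : ExpChar κ p := .prime Fact.out
  set χ : A →+* κ := (algebraMap S κ).comp (FrobTwist.un S p e) with hχ
  have hkey : ∀ r : S, χ (algebraMap S A r) = algebraMap S κ r ^ p ^ e := by
    intro r
    have h2 : FrobTwist.un S p e (algebraMap S A r) = r ^ p ^ e := by
      show iterateFrobenius S p e r = r ^ p ^ e
      exact iterateFrobenius_def p e r
    rw [hχ, RingHom.comp_apply, h2, map_pow]
  set F : A →+ N →+ κ := AddMonoidHom.mk'
    (fun x => AddMonoidHom.mk' (fun y => χ x * g y ^ p ^ e)
      (fun y z => by simp only [map_add, add_pow_char_pow, mul_add]))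
    (fun x z => by ext y; simp [map_add, add_mul]) with hF
  have hbal : ∀ (r : S) (x : A) (y : N), F (r • x) y = F x (r • y) := by
    intro r x y
    show χ (r • x) * g y ^ p ^ e = χ x * g (r • y) ^ p ^ e
    rw [Algebra.smul_def, map_mul, hkey, map_smul, Algebra.smul_def (A := κ), mul_pow]
    ring
  have hθ : TensorProduct.liftAddHom F hbal (a ⊗ₜ[S] f 1) = 0 := by rw [ht, map_zero]
  rw [TensorProduct.liftAddHom_tmul] at hθ
  have hθ' : χ a = 0 := by
    have : F a (f 1) = χ a * g (f 1) ^ p ^ e := rfl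
    rw [this, hg1, one_pow, mul_one] at hθ
    exact hθ
  have hz : algebraMap S κ (FrobTwist.un S p e a) = 0 := hθ'
  obtain ⟨s, hs⟩ := (IsLocalization.map_eq_zero_iff P.primeCompl κ _).1 hz
  have hmem : (s : S) * FrobTwist.un S p e a ∈ P := hs ▸ P.zero_mem
  rcases hPp.mem_or_mem hmem with h | h
  · exact absurd h s.2
  · exact h

/-- let `(R, m)` be a local ring with `p ∈ m`, `R/pR` reduced, and
`α : R → M` a map of `R`-modules whose reduction `α̅ : R/pR → M/pM` is injective.
Then `F^e(α̅)` is injective for all `e ≥ 0`, where `F^e` is the `e`-th Frobenius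
functor (base change along the `e`-th Frobenius of `R/pR`). -/
theorem stmt10 {R M : Type*} [CommRing R] [IsLocalRing R] [IsNoetherianRing R]
    [AddCommGroup M] [Module R M]
    (p : ℕ) [Fact p.Prime] (hp : (p : R) ∈ IsLocalRing.maximalIdeal R)
    [IsReduced (R ⧸ Ideal.span {(p : R)})] [CharP (R ⧸ Ideal.span {(p : R)}) p]
    (α : R →ₗ[R] M)
    (ab : (R ⧸ Ideal.span {(p : R)}) →ₗ[R ⧸ Ideal.span {(p : R)}]
      (M ⧸ (Ideal.span {(p : R)} • ⊤ : Submodule R M)))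
    (hab : ∀ r : R, ab (Ideal.Quotient.mk _ r) = Submodule.Quotient.mk (α r))
    (hinj : Function.Injective ab) (e : ℕ) :
    Function.Injective (ab.baseChange (FrobTwist (R ⧸ Ideal.span {(p : R)}) p e)) :=
  aux_baseChange_injective p ab hinj e
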